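/- For θ ∈ (0,1], the power series coefficients p(n) of h(s) = 1 − a(1−s) + a(1+θ)^{-1}(1−s)^{1+θ} are p(0) = 1 − aθ/(1+θ), p(1) = 0, and p(n) = (n!)^{-1} θ(1−θ)(2−θ)⋯(n−2−θ) a for n ≥ 2; if moreover 0 ≤ a ≤ 1 + 1/θ, then all p(n) ≥ 0 and ∑_{n≥0} p(n) = 1, i.e. h is a probability generating function. -/

import Mathlib

open Real

noncomputable def bb (θ : ℝ) : ℕ → ℝ
  | 0 => 1
  | 1 => -(1+θ)
  | (n+2) => (1+θ) * θ * (∏ k ∈ Finset.Icc 1 n, ((k:ℝ) - θ)) / (n+2).factorial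

lemma bb_rec (θ : ℝ) (n : ℕ) :
    ((n:ℝ)+1) * bb θ (n+1) = ((n:ℝ) - (1+θ)) * bb θ n := by
  match n with
  | 0 => simp [bb]
  | 1 => simp [bb]; norm_num; ring
  | (m+2) =>
    push_cast
    show ((m:ℝ)+2+1) * bb θ ((m+1)+2) = ((m:ℝ)+2 - (1+θ)) * bb θ (m+2)
    simp only [bb]
    rw [Finset.prod_Icc_succ_top (by omega : 1 ≤ m+1)]
    rw [show ((m+1)+2).factorial = (m+3) * (m+2).factorial from Nat.factorial_succ (m+2)]
    have hf : ((m+2).factorial : ℝ) ≠ 0 := Nat.cast_ne_zero.2 (Nat.factorial_ne_zero _)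
    push_cast
    field_simp
    ring

noncomputable def dd (θ : ℝ) (N : ℕ) : ℝ := ∑ n ∈ Finset.range (N+1), bb θ n

lemma dd_zero (θ : ℝ) : dd θ 0 = 1 := by simp [dd, bb]

lemma dd_succ (θ : ℝ) (N : ℕ) : dd θ (N+1) = dd θ N + bb θ (N+1) := by
  simp [dd, Finset.sum_range_succ]

lemma dd_rec (θ : ℝ) (N : ℕ) :
    ((N:ℝ)+1) * dd θ (N+1) = ((N:ℝ) - θ) * dd θ N := by
  induction N with
  | zero =>
    simp [dd_zero, dd_succ, bb]
  | succ N ih =>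
    have e1 := dd_succ θ (N+1)
    have e2 := bb_rec θ (N+1)
    have e4 := dd_succ θ N
    push_cast at e2 ⊢
    linear_combination (↑N+2)*e1 + e2 - (↑N-θ)*e4 + ih

lemma dd_bounds {θ : ℝ} (hθ0 : 0 < θ) (hθ1 : θ ≤ 1) (N : ℕ) (hN : 1 ≤ N) :
    -θ ≤ (N:ℝ) * dd θ N ∧ dd θ N ≤ 0 := by
  induction N with
  | zero => omega
  | succ N ih =>
    rcases Nat.eq_or_lt_of_le hN with h1 | h1
    · have : N = 0 := by omega
      subst this
      have : dd θ 1 = -θ := by simp [dd_succ, dd_zero, bb]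
      rw [this]; constructor
      · push_cast; linarith
      · linarith
    · have hN1 : 1 ≤ N := by omega
      obtain ⟨ih1, ih2⟩ := ih hN1
      have hr := dd_rec θ N
      have hN0 : (1:ℝ) ≤ (N:ℝ) := by exact_mod_cast hN1
      have hd1 : dd θ (N+1) ≤ 0 := by
        have h2 : ((N:ℝ)+1) * dd θ (N+1) ≤ 0 := by nlinarith
        nlinarith
      constructor
      · push_cast
        rw [hr]
        nlinarith
      · exact hd1

lemma bb_nonneg {θ : ℝ} (hθ0 : 0 < θ) (hθ1 : θ ≤ 1) (n : ℕ) (hn : 2 ≤ n) : 0 ≤ bb θ n := by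
  obtain ⟨m, rfl⟩ : ∃ m, n = m + 2 := ⟨n - 2, by omega⟩
  show (0:ℝ) ≤ (1+θ) * θ * _ / _
  apply div_nonneg _ (by positivity)
  apply mul_nonneg (mul_nonneg (by linarith) hθ0.le)
  apply Finset.prod_nonneg
  intro k hk
  have : 1 ≤ k := (Finset.mem_Icc.1 hk).1
  have : (1:ℝ) ≤ (k:ℝ) := by exact_mod_cast this
  linarith

lemma sum_range_bb_shift (θ : ℝ) (N : ℕ) :
    ∑ n ∈ Finset.range N, bb θ (n+2) = dd θ (N+1) + θ := by
  induction N with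
  | zero => simp [dd_succ, dd_zero, bb]
  | succ N ih => rw [Finset.sum_range_succ, ih, dd_succ θ (N+1)]; ring

lemma tendsto_dd {θ : ℝ} (hθ0 : 0 < θ) (hθ1 : θ ≤ 1) :
    Filter.Tendsto (dd θ) Filter.atTop (nhds 0) := by
  refine squeeze_zero_norm' ?_ (tendsto_const_div_atTop_nhds_zero_nat θ)
  · filter_upwards [Filter.eventually_ge_atTop 1] with N hN
    obtain ⟨h1, h2⟩ := dd_bounds hθ0 hθ1 N hN
    have hN0 : (1:ℝ) ≤ (N:ℝ) := by exact_mod_cast hN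
    rw [Real.norm_eq_abs, abs_of_nonpos h2]
    rw [le_div_iff₀ (by linarith : (0:ℝ) < (N:ℝ))]
    nlinarith

lemma summable_bb {θ : ℝ} (hθ0 : 0 < θ) (hθ1 : θ ≤ 1) : Summable (bb θ) := by
  rw [← summable_nat_add_iff 2]
  apply summable_of_sum_range_le (fun n => bb_nonneg hθ0 hθ1 (n+2) (by omega))
  intro N
  rw [sum_range_bb_shift]
  have := (dd_bounds hθ0 hθ1 (N+1) (by omega)).2
  linarith

lemma hasSum_bb {θ : ℝ} (hθ0 : 0 < θ) (hθ1 : θ ≤ 1) : HasSum (bb θ) 0 := by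
  have hs := summable_bb hθ0 hθ1
  have h1 := hs.hasSum.tendsto_sum_nat
  have h2 : Filter.Tendsto (fun N => ∑ n ∈ Finset.range (N+1), bb θ n)
      Filter.atTop (nhds (∑' n, bb θ n)) :=
    h1.comp (Filter.tendsto_add_atTop_nat 1)
  have := tendsto_nhds_unique h2 (tendsto_dd hθ0 hθ1)
  exact this ▸ hs.hasSum

lemma bb_le {θ : ℝ} (hθ0 : 0 < θ) (hθ1 : θ ≤ 1) (n : ℕ) : |bb θ n| ≤ 1 + θ := by
  match n with
  | 0 => show |(1:ℝ)| ≤ 1 + θ; rw [abs_one]; linarith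
  | 1 => show |(-(1+θ))| ≤ 1 + θ; rw [abs_neg, abs_of_nonneg (by linarith)]
  | (m+2) =>
    have h0 : 0 ≤ bb θ (m+2) := bb_nonneg hθ0 hθ1 _ (by omega)
    rw [abs_of_nonneg h0]
    have hb : bb θ (m+2) = dd θ (m+2) - dd θ (m+1) := by rw [dd_succ]; ring
    obtain ⟨h1, h2⟩ := dd_bounds hθ0 hθ1 (m+1) (by omega)
    obtain ⟨h3, h4⟩ := dd_bounds hθ0 hθ1 (m+2) (by omega)
    have hm : (1:ℝ) ≤ ((m+1:ℕ):ℝ) := by exact_mod_cast Nat.one_le_iff_ne_zero.2 (by omega)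
    rw [hb]
    nlinarith

noncomputable def FF (θ : ℝ) (y : ℝ) : ℝ := ∑' n, bb θ n * y ^ n

lemma summable_bb_pow {θ : ℝ} (hθ0 : 0 < θ) (hθ1 : θ ≤ 1) {s : ℝ}
    (hs0 : 0 ≤ s) (hs1 : s ≤ 1) : Summable (fun n => bb θ n * s ^ n) := by
  rw [← summable_nat_add_iff 2]
  apply Summable.of_nonneg_of_le
    (fun n => mul_nonneg (bb_nonneg hθ0 hθ1 (n+2) (by omega)) (pow_nonneg hs0 _))
    (fun n => ?_) ((summable_nat_add_iff 2).2 (summable_bb hθ0 hθ1))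
  exact mul_le_of_le_one_right (bb_nonneg hθ0 hθ1 (n+2) (by omega))
    (pow_le_one₀ hs0 hs1)

lemma summable_deriv_bound {r : ℝ} (hr0 : 0 < r) (hr1 : r < 1) (C : ℝ) :
    Summable (fun n : ℕ => C / r * ((n:ℕ) * r ^ n)) := by
  apply Summable.mul_left
  have := summable_pow_mul_geometric_of_norm_lt_one (R := ℝ) 1
    (by rwa [Real.norm_eq_abs, abs_of_pos hr0])
  exact this.congr (fun n => by rw [pow_one])

lemma deriv_term_bound {θ : ℝ} (hθ0 : 0 < θ) (hθ1 : θ ≤ 1) {r : ℝ} (hr0 : 0 < r)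
    (n : ℕ) (z : ℝ) (hz : z ∈ Set.Ioo (-r) r) :
    ‖bb θ n * ((n:ℝ) * z ^ (n-1))‖ ≤ (1+θ) / r * ((n:ℕ) * r ^ n) := by
  obtain ⟨hz1, hz2⟩ := hz
  have hza : |z| ≤ r := by rw [abs_le]; constructor <;> linarith
  match n with
  | 0 => simp
  | (m+1) =>
    have h1 : ‖bb θ (m+1) * (((m+1:ℕ):ℝ) * z ^ m)‖ ≤ (1+θ) * (((m+1:ℕ):ℝ) * r ^ m) := by
      rw [norm_mul, norm_mul, Real.norm_eq_abs, Real.norm_eq_abs, Real.norm_eq_abs,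
        abs_of_nonneg (by positivity : (0:ℝ) ≤ ((m+1:ℕ):ℝ)), abs_pow]
      apply mul_le_mul (bb_le hθ0 hθ1 _) ?_ (by positivity) (by linarith)
      exact mul_le_mul_of_nonneg_left (pow_le_pow_left₀ (abs_nonneg z) hza m) (by positivity)
    calc ‖bb θ (m+1) * (((m+1:ℕ):ℝ) * z ^ ((m+1)-1))‖
        = ‖bb θ (m+1) * (((m+1:ℕ):ℝ) * z ^ m)‖ := by norm_num
      _ ≤ (1+θ) * (((m+1:ℕ):ℝ) * r ^ m) := h1
      _ = (1+θ) / r * (((m+1:ℕ):ℝ) * r ^ (m+1)) := by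
          field_simp
          ring

lemma summable_at_zero (θ : ℝ) : Summable (fun n => bb θ n * (0:ℝ) ^ n) := by
  apply summable_of_ne_finset_zero (s := {0})
  intro n hn
  simp only [Finset.mem_singleton] at hn
  rw [zero_pow hn, mul_zero]

lemma FF_hasDerivAt {θ : ℝ} (hθ0 : 0 < θ) (hθ1 : θ ≤ 1) {y : ℝ} (hy : |y| < 1) :
    HasDerivAt (FF θ) (∑' n, bb θ n * ((n:ℝ) * y ^ (n-1))) y := by
  set r := (1 + |y|)/2 with hr
  have h0y := abs_nonneg y
  have hr0 : 0 < r := by positivity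
  have hry : |y| < r := by rw [hr]; linarith
  have hr1 : r < 1 := by rw [hr]; linarith
  have hmem : y ∈ Set.Ioo (-r) r := by
    rw [abs_lt] at hry; exact ⟨hry.1, hry.2⟩
  exact hasDerivAt_tsum_of_isPreconnected
    (summable_deriv_bound hr0 hr1 (1+θ))
    isOpen_Ioo (convex_Ioo (-r) r).isPreconnected
    (fun n z _ => (hasDerivAt_pow n z).const_mul (bb θ n))
    (fun n z hz => deriv_term_bound hθ0 hθ1 hr0 n z hz)
    (Set.mem_Ioo.2 ⟨by linarith, hr0⟩) (summable_at_zero θ) hmem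

lemma summable_deriv_series {θ : ℝ} (hθ0 : 0 < θ) (hθ1 : θ ≤ 1) {y : ℝ} (hy : |y| < 1) :
    Summable (fun n => bb θ n * ((n:ℝ) * y ^ (n-1))) := by
  set r := (1 + |y|)/2 with hr
  have h0y := abs_nonneg y
  have hr0 : 0 < r := by positivity
  have hry : |y| < r := by rw [hr]; linarith
  have hr1 : r < 1 := by rw [hr]; linarith
  have hmem : y ∈ Set.Ioo (-r) r := by rw [abs_lt] at hry; exact ⟨hry.1, hry.2⟩
  exact Summable.of_norm_bounded (summable_deriv_bound hr0 hr1 (1+θ))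
    (fun n => deriv_term_bound hθ0 hθ1 hr0 n y hmem)

lemma ode_identity {θ : ℝ} (hθ0 : 0 < θ) (hθ1 : θ ≤ 1) {y : ℝ} (hy : |y| < 1) :
    (1 - y) * (∑' n, bb θ n * ((n:ℝ) * y ^ (n-1))) = -(1+θ) * FF θ y := by
  set g' : ℕ → ℝ := fun n => bb θ n * ((n:ℝ) * y ^ (n-1)) with hg'
  have hsum : Summable g' := summable_deriv_series hθ0 hθ1 hy
  have hshift : Summable (fun n => g' (n+1)) := (summable_nat_add_iff 1).2 hsum
  have hS : ∑' n, g' n = ∑' n, g' (n+1) := by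
    rw [hsum.tsum_eq_zero_add]
    simp [hg']
  have hterm : ∀ n : ℕ, y * g' n = (n:ℝ) * bb θ n * y ^ n := by
    intro n
    match n with
    | 0 => simp [hg']
    | (m+1) =>
      show y * (bb θ (m+1) * (((m+1:ℕ):ℝ) * y ^ ((m+1)-1))) = _
      rw [Nat.add_sub_cancel, pow_succ]
      push_cast
      ring
  have hsum2 : Summable (fun n : ℕ => (n:ℝ) * bb θ n * y ^ n) :=
    (hsum.mul_left y).congr hterm
  have hyS : y * (∑' n, g' n) = ∑' (n:ℕ), (n:ℝ) * bb θ n * y ^ n := by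
    rw [← tsum_mul_left]
    exact tsum_congr hterm
  calc (1 - y) * (∑' n, g' n) = (∑' n, g' n) - y * (∑' n, g' n) := by ring
    _ = (∑' n, g' (n+1)) - ∑' (n:ℕ), (n:ℝ) * bb θ n * y ^ n := by rw [← hS, hyS]
    _ = ∑' (n:ℕ), (g' (n+1) - (n:ℝ) * bb θ n * y ^ n) := (hshift.tsum_sub hsum2).symm
    _ = ∑' n, -(1+θ) * (bb θ n * y ^ n) := by
        apply tsum_congr
        intro n
        have hrec := bb_rec θ n
        show bb θ (n+1) * (((n+1:ℕ):ℝ) * y ^ ((n+1)-1)) - _ = _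
        rw [Nat.add_sub_cancel]
        push_cast
        linear_combination y ^ n * hrec
    _ = -(1+θ) * FF θ y := tsum_mul_left

lemma FF_zero (θ : ℝ) : FF θ 0 = 1 := by
  have : FF θ 0 = bb θ 0 * (0:ℝ) ^ (0:ℕ) :=
    tsum_eq_single 0 (fun n hn => by rw [zero_pow hn, mul_zero])
  rw [this]
  simp [bb]

lemma FF_eq {θ : ℝ} (hθ0 : 0 < θ) (hθ1 : θ ≤ 1) {s : ℝ}
    (hs0 : 0 ≤ s) (hs1 : s < 1) : FF θ s = (1 - s) ^ (1+θ) := by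
  set φ : ℝ → ℝ := fun y => FF θ y * (1 - y) ^ (-(1+θ)) with hφ
  have key : ∀ x ∈ Set.Ioo (-1:ℝ) 1, HasDerivAt φ 0 x := by
    intro x hx
    obtain ⟨hxa, hxb⟩ := hx
    have hx1 : |x| < 1 := abs_lt.2 ⟨hxa, hxb⟩
    have h1x : (0:ℝ) < 1 - x := by linarith
    have hF := FF_hasDerivAt hθ0 hθ1 hx1
    have hid : HasDerivAt (fun y : ℝ => 1 - y) (-1) x := by
      simpa using (hasDerivAt_id x).const_sub 1
    have hpow : HasDerivAt (fun y : ℝ => (1 - y) ^ (-(1+θ)))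
        (-1 * (-(1+θ)) * (1-x) ^ (-(1+θ)-1)) x :=
      hid.rpow_const (Or.inl h1x.ne')
    have hmul := hF.mul hpow
    refine hmul.congr_deriv (Eq.symm ?_)
    have hode := ode_identity hθ0 hθ1 hx1
    have e2 : (1-x) ^ (-(1+θ)) = (1-x) ^ (-(1+θ)-1) * (1-x) := by
      rw [← Real.rpow_add_one h1x.ne', show -(1+θ)-1+1 = -(1+θ) by ring]
    rw [e2]
    linear_combination (-((1-x) ^ (-(1+θ)-1))) * hode
  have hconst : φ s = φ 0 := by
    refine (convex_Ioo (-1:ℝ) 1).is_const_of_fderivWithin_eq_zero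
      (fun x hx => ((key x hx).differentiableAt).differentiableWithinAt)
      (fun x hx => ?_) ⟨by linarith, hs1⟩ ⟨by norm_num, by norm_num⟩
    rw [fderivWithin_of_isOpen isOpen_Ioo hx, (key x hx).hasFDerivAt.fderiv]
    ext
    simp
  have hφ0 : φ 0 = 1 := by
    simp only [hφ, FF_zero, sub_zero, Real.one_rpow, mul_one]
  rw [hφ0] at hconst
  have hconst2 : FF θ s * (1 - s) ^ (-(1+θ)) = 1 := hconst
  have hpos : (0:ℝ) < (1 - s) ^ (1+θ) := Real.rpow_pos_of_pos (by linarith) _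
  have hneg : (1 - s) ^ (-(1+θ)) = ((1 - s) ^ (1+θ))⁻¹ := by
    rw [← Real.rpow_neg (by linarith)]
  rw [hneg] at hconst2
  field_simp at hconst2
  linarith [hconst2]

lemma hasSum_bb_pow {θ : ℝ} (hθ0 : 0 < θ) (hθ1 : θ ≤ 1) {s : ℝ}
    (hs0 : 0 ≤ s) (hs1 : s ≤ 1) :
    HasSum (fun n => bb θ n * s ^ n) ((1-s) ^ (1+θ)) := by
  rcases eq_or_lt_of_le hs1 with rfl | h
  · rw [sub_self, Real.zero_rpow (by linarith : (1:ℝ)+θ ≠ 0)]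
    simpa using hasSum_bb hθ0 hθ1
  · have hsum := summable_bb_pow hθ0 hθ1 hs0 hs1
    have hh := hsum.hasSum
    rwa [show ∑' n, bb θ n * s ^ n = (1-s) ^ (1+θ) from FF_eq hθ0 hθ1 hs0 h] at hh

theorem stmt_2 (θ a : ℝ) (hθ : θ ∈ Set.Ioc (0:ℝ) 1)
    (ha : a ∈ Set.Icc (0:ℝ) (1 + 1/θ))
    (h : ℝ → ℝ)
    (hdef : ∀ s : ℝ,
      h s = 1 - a * (1 - s) + a * (1 + θ)⁻¹ * (1 - s) ^ (1 + θ))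
    (p : ℕ → ℝ)
    (hp : ∀ n : ℕ, p n =
      if n = 0 then 1 - a * θ / (1 + θ)
      else if n = 1 then 0
      else θ * (∏ k ∈ Finset.Icc 1 (n - 2), ((k : ℝ) - θ)) * a / n.factorial) :
    (∀ s ∈ Set.Icc (0:ℝ) 1, HasSum (fun n => p n * s ^ n) (h s)) ∧
    (∀ n : ℕ, 0 ≤ p n) ∧ HasSum p 1 := by
  obtain ⟨hθ0, hθ1⟩ := hθ
  obtain ⟨ha0, ha1⟩ := ha
  have h1θ : (0:ℝ) < 1 + θ := by linarith
  have hpn : ∀ n : ℕ, p n = a / (1+θ) * bb θ n +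
      (if n = 0 then 1 - a else if n = 1 then a else 0) := by
    intro n
    rw [hp n]
    match n with
    | 0 => show (1:ℝ) - a * θ / (1+θ) = a/(1+θ) * bb θ 0 + (1-a); simp [bb]; field_simp; ring
    | 1 => show (0:ℝ) = a/(1+θ) * bb θ 1 + a; simp [bb]; field_simp; ring
    | (m+2) =>
      show θ * (∏ k ∈ Finset.Icc 1 (m+2-2), ((k:ℝ) - θ)) * a / (m+2).factorial
        = a/(1+θ) * bb θ (m+2) + 0
      rw [show m+2-2 = m from rfl, add_zero]
      show _ = a/(1+θ) * ((1+θ) * θ * (∏ k ∈ Finset.Icc 1 m, ((k:ℝ) - θ)) / (m+2).factorial)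
      field_simp
  have main : ∀ s ∈ Set.Icc (0:ℝ) 1, HasSum (fun n => p n * s ^ n) (h s) := by
    intro s hs
    obtain ⟨hs0, hs1⟩ := hs
    have hb := (hasSum_bb_pow hθ0 hθ1 hs0 hs1).mul_left (a/(1+θ))
    have hq1 : HasSum (fun n : ℕ => if n = 0 then 1 - a else 0) (1-a) := hasSum_ite_eq 0 _
    have hq2 : HasSum (fun n : ℕ => if n = 1 then a * s else 0) (a*s) := hasSum_ite_eq 1 _
    have hq := (hq1.add hq2).add hb
    have heq : (fun n : ℕ => ((if n = 0 then 1 - a else 0) + (if n = 1 then a * s else 0))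
        + a/(1+θ) * (bb θ n * s ^ n)) = fun n => p n * s ^ n := by
      funext n
      rw [hpn n]
      match n with
      | 0 => simp; ring
      | 1 => simp; ring
      | (m+2) => simp; ring
    rw [heq] at hq
    have hval : (1 - a) + a * s + a/(1+θ) * (1-s)^(1+θ) = h s := by
      rw [hdef s, div_eq_mul_inv]
      ring
    rwa [hval] at hq
  refine ⟨main, ?_, ?_⟩
  · intro n
    rw [hp n]
    match n with
    | 0 =>
      show (0:ℝ) ≤ 1 - a * θ / (1+θ)
      rw [sub_nonneg, div_le_one h1θ]
      have : a * θ ≤ (1 + 1/θ) * θ := by nlinarith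
      calc a * θ ≤ (1 + 1/θ) * θ := this
        _ = θ + 1 := by field_simp
        _ = 1 + θ := by ring
    | 1 => exact le_refl 0
    | (m+2) =>
      show (0:ℝ) ≤ θ * (∏ k ∈ Finset.Icc 1 (m+2-2), ((k:ℝ) - θ)) * a / (m+2).factorial
      have hprod : 0 ≤ ∏ k ∈ Finset.Icc 1 (m+2-2), ((k:ℝ) - θ) := by
        apply Finset.prod_nonneg
        intro k hk
        have : 1 ≤ k := (Finset.mem_Icc.1 hk).1
        have : (1:ℝ) ≤ (k:ℝ) := by exact_mod_cast this
        linarith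
      positivity
  · have := main 1 ⟨by norm_num, le_refl 1⟩
    have hh1 : h 1 = 1 := by
      rw [hdef 1, sub_self, Real.zero_rpow (by linarith : (1:ℝ)+θ ≠ 0)]
      ring
    rw [hh1] at this
    simpa using this
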